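/- arXiv:2102.11816 — 2 statements merged into one kernel-verified Lean document; each statement's English description precedes it below -/
import Mathlib

section
/- Morphism property of the faces-contraction map: let A be a unital associative ℂ-algebra, p, q ≥ 1, α ∈ S_p, β ∈ S_q, and words (A_0,…,A_p) ∈ A^{p+1}, (B_0,…,B_q) ∈ A^{q+1}. Then the shuffle product of the faces-contraction multilinear maps satisfies ♯(A_0,…,A_p; α) ⧢ ♯(B_0,…,B_q; β) = Σ_{η ∈ Sh(p,q)} ♯(A_0,…,A_{p−1}, A_p·B_0, B_1,…,B_q; η∘(α⊗β)) as multilinear maps A^{p+q} → A. -/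
/-- `η ∈ S_N` is an `(a, N-a)`-shuffle: it is strictly increasing on the first `a`
positions and on the remaining positions (zero-based positions). -/
def IsShuffle {N : ℕ} (a : ℕ) (η : Equiv.Perm (Fin N)) : Prop :=
  ∀ i j : Fin N, i < j → ((j : ℕ) < a ∨ a ≤ (i : ℕ)) → η i < η j

instance {N a : ℕ} : DecidablePred (fun η : Equiv.Perm (Fin N) => IsShuffle a η) :=
  fun η => by unfold IsShuffle; infer_instance

/-- The finite set `Sh(a, N-a)` of `(a, N-a)`-shuffles inside `S_N`. -/
def shuffles (N a : ℕ) : Finset (Equiv.Perm (Fin N)) :=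
  Finset.univ.filter (fun η => IsShuffle a η)

/-- The block sum `σ ⊗ τ ∈ S_{p+q}` of `σ ∈ S_p` and `τ ∈ S_q`. -/
def blockSum {p q : ℕ} (σ : Equiv.Perm (Fin p)) (τ : Equiv.Perm (Fin q)) :
    Equiv.Perm (Fin (p + q)) :=
  finSumFinEquiv.permCongr (σ.sumCongr τ)

/-- The shuffle product of two multilinear maps `m : A^p → A`, `m' : A^q → A`. -/
def shuffleF {A : Type*} [Ring A] (p q : ℕ)
    (m : (Fin p → A) → A) (m' : (Fin q → A) → A) : (Fin (p + q) → A) → A :=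
  fun X => ∑ η ∈ shuffles (p + q) p,
    m (fun i => X (η (Fin.castAdd q i))) * m' (fun j => X (η (Fin.natAdd p j)))

/-- The faces-contraction multilinear map `♯(A_0,…,A_n; σ) : A^n → A`,
`(X_1,…,X_n) ↦ A_0·X_{σ(1)}·A_1·X_{σ(2)}·A_2 ⋯ X_{σ(n)}·A_n`. -/
def facesContraction {A : Type*} [Ring A] (n : ℕ) (σ : Equiv.Perm (Fin n))
    (As : Fin (n + 1) → A) : (Fin n → A) → A :=
  fun Xs => As 0 * (List.ofFn fun i : Fin n => Xs (σ i) * As i.succ).prod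

/-- The concatenated word `(A_0,…,A_{p−1}, A_p·B_0, B_1,…,B_q) ∈ A^{p+q+1}`. -/
def concatWord {A : Type*} [Mul A] {p q : ℕ} (As : Fin (p + 1) → A)
    (Bs : Fin (q + 1) → A) : Fin (p + q + 1) → A := fun i =>
  if h : (i : ℕ) < p then As ⟨i, by omega⟩
  else if h2 : (i : ℕ) = p then As (Fin.last p) * Bs 0
  else Bs ⟨(i : ℕ) - p, by have := i.isLt; omega⟩

lemma blockSum_castAdd {p q : ℕ} (α : Equiv.Perm (Fin p)) (β : Equiv.Perm (Fin q)) (i : Fin p) :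
    blockSum α β (Fin.castAdd q i) = Fin.castAdd q (α i) := by
  simp [blockSum, Equiv.permCongr_apply]

lemma blockSum_natAdd {p q : ℕ} (α : Equiv.Perm (Fin p)) (β : Equiv.Perm (Fin q)) (j : Fin q) :
    blockSum α β (Fin.natAdd p j) = Fin.natAdd p (β j) := by
  simp [blockSum, Equiv.permCongr_apply]

/-- morphism property of the faces-contraction map: on a unital associative
`ℂ`-algebra `A`, for `α ∈ S_p`, `β ∈ S_q` and words `(A_0,…,A_p)`, `(B_0,…,B_q)`,
`♯(A_0,…,A_p; α) ⧢ ♯(B_0,…,B_q; β) =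
  Σ_{η ∈ Sh(p,q)} ♯(A_0,…,A_{p−1}, A_p·B_0, B_1,…,B_q; η∘(α⊗β))`
as multilinear maps `A^{p+q} → A`. -/
theorem facesContraction_shuffle {A : Type*} [Ring A] [Algebra ℂ A] (p q : ℕ)
    (hp : 1 ≤ p) (hq : 1 ≤ q) (α : Equiv.Perm (Fin p)) (β : Equiv.Perm (Fin q))
    (As : Fin (p + 1) → A) (Bs : Fin (q + 1) → A) :
    shuffleF p q (facesContraction p α As) (facesContraction q β Bs) =
      fun Xs => ∑ η ∈ shuffles (p + q) p,
        facesContraction (p + q) (η * blockSum α β) (concatWord As Bs) Xs := by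
  obtain ⟨m, rfl⟩ : ∃ m, p = m + 1 := ⟨p - 1, by omega⟩
  funext Xs
  refine Finset.sum_congr rfl fun η _ => ?_
  simp only [facesContraction, shuffleF, Equiv.Perm.mul_apply]
  rw [List.ofFn_add (n := m+1) (m := q)
    (f := fun k : Fin (m+1+q) => Xs (η (blockSum α β k)) * concatWord As Bs k.succ),
    List.prod_append]
  simp only [show ∀ i : Fin (m+1), Fin.castLE (Nat.le_add_right (m+1) q) i = Fin.castAdd q i from fun _ => rfl]
  rw [List.ofFn_succ'
    (f := fun i : Fin (m+1) => Xs (η (blockSum α β (Fin.castAdd q i))) * concatWord As Bs (Fin.castAdd q i).succ),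
    List.ofFn_succ' (f := fun i : Fin (m+1) => Xs (η (Fin.castAdd q (α i))) * As i.succ),
    List.prod_concat, List.prod_concat]
  have h0 : concatWord As Bs 0 = As 0 := by
    rw [concatWord]
    simp only [Fin.val_zero]
    exact dif_pos (show 0 < m + 1 by omega)
  have h1 : ∀ i : Fin m, concatWord As Bs (Fin.castAdd q i.castSucc).succ = As i.castSucc.succ := by
    intro i
    rw [concatWord]
    have : ((Fin.castAdd q i.castSucc).succ : ℕ) = i + 1 := rfl
    rw [dif_pos (by omega)]
    congr 1
  have h2 : concatWord As Bs (Fin.castAdd q (Fin.last m)).succ = As (Fin.last (m+1)) * Bs 0 := by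
    rw [concatWord]
    have : ((Fin.castAdd q (Fin.last m)).succ : ℕ) = m + 1 := rfl
    rw [dif_neg (by omega), dif_pos (by omega)]
  have h3 : ∀ j : Fin q, concatWord As Bs (Fin.natAdd (m+1) j).succ = Bs j.succ := by
    intro j
    rw [concatWord]
    have : ((Fin.natAdd (m+1) j).succ : ℕ) = m + 1 + j + 1 := rfl
    rw [dif_neg (by omega), dif_neg (by omega)]
    congr 1
    ext
    simp
    omega
  simp only [blockSum_castAdd, blockSum_natAdd, h0, h2]
  simp only [h1, h3]
  simp [mul_assoc]
end

section
/- Chen relation for the non-commutative signature operators: let A be a complex unital Banach algebra and X : ℝ → A continuously differentiable. For every levelled forest f with n = ‖f‖ and k = nt(f), every continuous (n+k−1)-linear map m : A^{n+k−1} → A, and all reals s ≤ u ≤ t, one has 𝒳_{s,t}(f)(m) = Σ_{p=0}^{n} 𝒳_{u,t}(f_-^p)(𝒳_{s,u}(f_+^p)(m)) as continuous (k−1)-linear maps A^{k−1} → A. -/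
/-- `B` encodes a genuine levelled forest `f = (σ, c)`: a nonempty list of blocks (the
blocks of the one-line word of `σ`, of sizes `c_1,…,c_k`) whose concatenation is a
permutation word of `{1,…,n}`; `‖f‖ = n = B.flatten.length`, `nt(f) = k = B.length`. -/
def IsLF (B : List (List ℕ)) : Prop :=
  B ≠ [] ∧ List.Perm B.flatten (List.range' 1 B.flatten.length)

/-- The lower part `f_-^p` of the horizontal splitting at level `p`. -/
def lowerW (p : ℕ) (B : List (List ℕ)) : List (List ℕ) :=
  B.map (List.filter (fun a => decide (a ≤ p)))

/-- Split a block at its letters `≤ p` (removed letters acting as separators, empty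
segments kept), subtracting `p` from the remaining letters. -/
def splitUpper (p : ℕ) : List ℕ → List (List ℕ)
  | [] => [[]]
  | a :: l =>
    if a ≤ p then [] :: splitUpper p l
    else
      match splitUpper p l with
      | [] => [[a - p]]
      | s :: rest => ((a - p) :: s) :: rest

/-- The upper part `f_+^p` of the horizontal splitting at level `p`. -/
def upperW (p : ℕ) (B : List (List ℕ)) : List (List ℕ) :=
  (B.map (splitUpper p)).flatten

/-- The iterated integral `I^n_{s,t}(g)` over the simplex
`Δ^n_{s,t} = {s < t_n < ⋯ < t_1 < t}`, as a nested Bochner integral;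
`I^0_{s,t}(g) = g`. -/
noncomputable def simplexIntegral {E : Type*} [NormedAddCommGroup E] [NormedSpace ℝ E] :
    (n : ℕ) → ℝ → ℝ → ((Fin n → ℝ) → E) → E
  | 0, _, _, g => g Fin.elim0
  | n + 1, s, t, g => ∫ r in s..t, simplexIntegral n s r (fun ts => g (Fin.cons r ts))

/-- The `N`-tuple `(Z_1,…,Z_N)` of Definition of the signature operators: the letters of
each block are replaced by the values `v` (in our use, `ℓ ↦ X'(t_ℓ)`), and the argument
`Y_j` is placed in the slot `ℓ_j` between the `j`-th and `(j+1)`-th blocks. -/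
def zList {A : Type*} [One A] (v : ℕ → A) : List (List ℕ) → List A → List A
  | [], _ => []
  | [b], _ => b.map v
  | b :: bs, ys => b.map v ++ (ys.headD 1 :: zList v bs ys.tail)

/-- The signature operator `𝒳_{s,t}(f)(m)` applied to the `(nt(f)−1)`-tuple `Ys`:
`(𝒳_{s,t}(f)(m))(Y_1,…,Y_{k−1}) = I^{‖f‖}_{s,t}((t_1,…,t_n) ↦ m(Z_1,…,Z_N))`, where
`Z_{ℓ_j} = Y_j` on the between-tree slots and `Z_{slot(r)} = X'(t_{σ(r)})` on the
within-tree slots (`σ(r)` being the `r`-th letter of the forest word). -/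
noncomputable def sigApply {A : Type*} [NormedRing A] [NormedAlgebra ℂ A]
    (X : ℝ → A) (B : List (List ℕ)) (s t : ℝ) {N : ℕ}
    (m : (Fin N → A) → A) (Ys : List A) : A :=
  simplexIntegral B.flatten.length s t fun ts =>
    m fun i =>
      (zList (fun ℓ =>
          if h : ℓ - 1 < B.flatten.length then deriv X (ts ⟨ℓ - 1, h⟩) else 1) B Ys).getD
        (i : ℕ) 1

lemma splitUpper_ne_nil (p : ℕ) (b : List ℕ) : splitUpper p b ≠ [] := by
  induction b with
  | nil => simp [splitUpper]
  | cons a l ih =>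
    by_cases h : a ≤ p
    · simp [splitUpper, h]
    · simp only [splitUpper, if_neg h]
      cases hsl : splitUpper p l with
      | nil => simp
      | cons s rest => simp

lemma upperW_ne_nil (p : ℕ) (b : List ℕ) (bs : List (List ℕ)) :
    upperW p (b :: bs) ≠ [] := by
  simp only [upperW, List.map_cons, List.flatten_cons]
  intro h
  rcases List.append_eq_nil_iff.mp h with ⟨h1, -⟩
  exact splitUpper_ne_nil p b h1

lemma zList_nil {A : Type*} [One A] (v : ℕ → A) (ys : List A) : zList v [] ys = [] := rfl

lemma zList_single {A : Type*} [One A] (v : ℕ → A) (b : List ℕ) (ys : List A) :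
    zList v [b] ys = b.map v := rfl

lemma zList_cons₂ {A : Type*} [One A] (v : ℕ → A) (b c : List ℕ) (bs : List (List ℕ))
    (ys : List A) :
    zList v (b :: c :: bs) ys = b.map v ++ (ys.headD 1 :: zList v (c :: bs) ys.tail) := rfl

lemma zList_cons_head {A : Type*} [One A] (v : ℕ → A) (x : ℕ) (s : List ℕ)
    (rest : List (List ℕ)) (ys : List A) :
    zList v ((x :: s) :: rest) ys = v x :: zList v (s :: rest) ys := by
  cases rest <;> simp [zList_single, zList_cons₂]

lemma zList_nil_head {A : Type*} [One A] (v : ℕ → A) (L : List (List ℕ)) (hL : L ≠ [])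
    (ys : List A) :
    zList v ([] :: L) ys = ys.headD 1 :: zList v L ys.tail := by
  cases L with
  | nil => exact absurd rfl hL
  | cons c cs => rw [zList_cons₂]; simp

lemma zup_single {A : Type*} [One A] (p : ℕ) (v w : ℕ → A) (b : List ℕ)
    (hp : ∀ a ∈ b, p < a → v (a - p) = w a) :
    zList v (splitUpper p b) ((b.filter (fun a => decide (a ≤ p))).map w) = b.map w := by
  induction b with
  | nil => simp [splitUpper, zList_single]
  | cons a l ih =>
    have hp' : ∀ x ∈ l, p < x → v (x - p) = w x := fun x hx => hp x (List.mem_cons_of_mem _ hx)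
    by_cases h : a ≤ p
    · rw [show splitUpper p (a :: l) = [] :: splitUpper p l by simp [splitUpper, h]]
      rw [show List.filter (fun x => decide (x ≤ p)) (a :: l)
          = a :: List.filter (fun x => decide (x ≤ p)) l by simp [List.filter_cons, h]]
      rw [List.map_cons, zList_nil_head _ _ (splitUpper_ne_nil p l)]
      simp [ih hp']
    · cases hsl : splitUpper p l with
      | nil => exact absurd hsl (splitUpper_ne_nil p l)
      | cons s rest =>
        rw [show splitUpper p (a :: l) = ((a - p) :: s) :: rest by
          simp [splitUpper, h, hsl]]
        rw [show List.filter (fun x => decide (x ≤ p)) (a :: l)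
            = List.filter (fun x => decide (x ≤ p)) l by simp [List.filter_cons, h]]
        rw [zList_cons_head, ← hsl, ih hp', hp a List.mem_cons_self (by omega),
          List.map_cons]

lemma zup_append {A : Type*} [One A] (p : ℕ) (v w : ℕ → A) (b : List ℕ)
    (S : List (List ℕ)) (hS : S ≠ []) (y : A) (ys : List A)
    (hp : ∀ a ∈ b, p < a → v (a - p) = w a) :
    zList v (splitUpper p b ++ S) ((b.filter (fun a => decide (a ≤ p))).map w ++ y :: ys)
      = b.map w ++ y :: zList v S ys := by
  induction b with
  | nil =>
    rw [show splitUpper p ([] : List ℕ) = [[]] by simp [splitUpper]]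
    rw [show ([[]] : List (List ℕ)) ++ S = [] :: S from rfl]
    rw [zList_nil_head _ _ hS]
    simp
  | cons a l ih =>
    have hp' : ∀ x ∈ l, p < x → v (x - p) = w x := fun x hx => hp x (List.mem_cons_of_mem _ hx)
    by_cases h : a ≤ p
    · rw [show splitUpper p (a :: l) = [] :: splitUpper p l by simp [splitUpper, h]]
      rw [show List.filter (fun x => decide (x ≤ p)) (a :: l)
          = a :: List.filter (fun x => decide (x ≤ p)) l by simp [List.filter_cons, h]]
      rw [List.cons_append, List.map_cons, List.cons_append,
        zList_nil_head _ _ (by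
          intro hcon
          rcases List.append_eq_nil_iff.mp hcon with ⟨h1, -⟩
          exact splitUpper_ne_nil p l h1)]
      simp [ih hp']
    · cases hsl : splitUpper p l with
      | nil => exact absurd hsl (splitUpper_ne_nil p l)
      | cons s rest =>
        rw [show splitUpper p (a :: l) = ((a - p) :: s) :: rest by
          simp [splitUpper, h, hsl]]
        rw [show List.filter (fun x => decide (x ≤ p)) (a :: l)
            = List.filter (fun x => decide (x ≤ p)) l by simp [List.filter_cons, h]]
        rw [List.cons_append, zList_cons_head]
        have := ih hp'
        rw [hsl, List.cons_append] at this
        rw [this, hp a List.mem_cons_self (by omega), List.map_cons, List.cons_append]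

lemma zList_split {A : Type*} [One A] (p : ℕ) (v w : ℕ → A) :
    ∀ (B : List (List ℕ)) (ys : List A),
      (∀ a ∈ B.flatten, p < a → v (a - p) = w a) →
      zList w B ys = zList v (upperW p B) (zList w (lowerW p B) ys) := by
  intro B
  induction B with
  | nil => intro ys _; rfl
  | cons b bs ih =>
    intro ys hp
    have hpb : ∀ a ∈ b, p < a → v (a - p) = w a := by
      intro a ha; exact hp a (by simp [ha])
    cases bs with
    | nil =>
      simp only [upperW, lowerW, List.map_cons, List.map_nil, List.flatten_cons,
        List.flatten_nil, List.append_nil, zList_single]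
      exact (zup_single p v w b hpb).symm
    | cons c cs =>
      have hpbs : ∀ a ∈ (c :: cs).flatten, p < a → v (a - p) = w a := by
        intro a ha
        refine hp a ?_
        rw [List.flatten_cons]
        exact List.mem_append_right _ ha
      have e2 : upperW p (b :: c :: cs) = splitUpper p b ++ upperW p (c :: cs) := by
        simp [upperW]
      have e1 : lowerW p (b :: c :: cs)
          = b.filter (fun a => decide (a ≤ p)) :: lowerW p (c :: cs) := by
        simp [lowerW]
      have e3 : lowerW p (c :: cs)
          = c.filter (fun a => decide (a ≤ p)) :: lowerW p cs := by
        simp [lowerW]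
      rw [zList_cons₂ w b c cs ys, e1, e2, e3, zList_cons₂, ← e3,
        zup_append p v w b _ (upperW_ne_nil p c cs) _ _ hpb, ← ih ys.tail hpbs]

lemma zList_congr {A : Type*} [One A] (v w : ℕ → A) :
    ∀ (B : List (List ℕ)) (ys : List A), (∀ a ∈ B.flatten, v a = w a) →
      zList v B ys = zList w B ys := by
  intro B
  induction B with
  | nil => intro ys _; rfl
  | cons b bs ih =>
    intro ys h
    have hb : ∀ a ∈ b, v a = w a := fun a ha => h a (by simp [ha])
    have hbs : ∀ a ∈ bs.flatten, v a = w a := fun a ha => h a (by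
      rw [List.flatten_cons]; exact List.mem_append_right _ ha)
    cases bs with
    | nil => simp only [zList_single]; exact List.map_congr_left hb
    | cons c cs =>
      rw [zList_cons₂, zList_cons₂, List.map_congr_left hb, ih ys.tail hbs]

lemma zList_length {A : Type*} [One A] (v : ℕ → A) :
    ∀ (B : List (List ℕ)) (ys : List A), B ≠ [] →
      (zList v B ys).length = B.flatten.length + (B.length - 1) := by
  intro B
  induction B with
  | nil => intro ys h; exact absurd rfl h
  | cons b bs ih =>
    intro ys _
    cases bs with
    | nil => simp [zList_single]
    | cons c cs =>
      rw [zList_cons₂]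
      simp only [List.length_append, List.length_map, List.length_cons,
        List.flatten_cons, List.length_append]
      rw [ih ys.tail (by simp)]
      simp
      omega

lemma zList_mem {A : Type*} [One A] (v : ℕ → A) :
    ∀ (B : List (List ℕ)) (ys : List A) (x : A), x ∈ zList v B ys →
      (∃ a ∈ B.flatten, x = v a) ∨ x ∈ ys ∨ x = 1 := by
  intro B
  induction B with
  | nil => intro ys x hx; exact absurd hx (by simp [zList_nil])
  | cons b bs ih =>
    intro ys x hx
    cases bs with
    | nil =>
      rw [zList_single] at hx
      rcases List.mem_map.mp hx with ⟨a, ha, rfl⟩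
      exact Or.inl ⟨a, by simp [ha], rfl⟩
    | cons c cs =>
      rw [zList_cons₂] at hx
      rcases List.mem_append.mp hx with h | h
      · rcases List.mem_map.mp h with ⟨a, ha, rfl⟩
        exact Or.inl ⟨a, by simp [ha], rfl⟩
      · rcases List.mem_cons.mp h with h | h
        · cases ys with
          | nil => right; right; simpa using h
          | cons y ys' => right; left; simp only [List.headD_cons] at h; simp [h]
        · rcases ih ys.tail x h with ⟨a, ha, rfl⟩ | h | h
          · refine Or.inl ⟨a, ?_, rfl⟩
            rw [List.flatten_cons]
            exact List.mem_append_right _ ha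
          · right; left; exact List.mem_of_mem_tail h
          · right; right; exact h

lemma map_zList {A C : Type*} [One A] [One C] (f : A → C) (hf : f 1 = 1) (v : ℕ → A) :
    ∀ (B : List (List ℕ)) (ys : List A),
      (zList v B ys).map f = zList (fun a => f (v a)) B (ys.map f) := by
  intro B
  induction B with
  | nil => intro ys; rfl
  | cons b bs ih =>
    intro ys
    cases bs with
    | nil => simp [zList_single]
    | cons c cs =>
      rw [zList_cons₂, zList_cons₂]
      rw [List.map_append, List.map_map, List.map_cons]
      rw [ih ys.tail]
      have h1 : f (ys.headD 1) = (ys.map f).headD 1 := by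
        cases ys <;> simp [hf]
      have h2 : ys.tail.map f = (ys.map f).tail := by
        cases ys <;> simp
      rw [h1, h2]
      rfl

lemma ofFn_getD {A : Type*} (L : List A) (q : ℕ) (h : L.length = q) (d : A) :
    List.ofFn (fun i : Fin q => L.getD (i : ℕ) d) = L := by
  subst h
  refine List.ext_getElem (by simp) ?_
  intro i h1 h2
  simp [List.getD_eq_getElem?_getD, List.getElem?_eq_getElem h2]

lemma lowerW_flatten (p : ℕ) (B : List (List ℕ)) :
    (lowerW p B).flatten = B.flatten.filter (fun a => decide (a ≤ p)) := by
  induction B with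
  | nil => rfl
  | cons b bs ih =>
    simp only [lowerW, List.map_cons, List.flatten_cons, List.filter_append]
    simp only [lowerW] at ih
    rw [ih]

lemma splitUpper_flatten (p : ℕ) (b : List ℕ) :
    (splitUpper p b).flatten = (b.filter (fun a => !decide (a ≤ p))).map (· - p) := by
  induction b with
  | nil => simp [splitUpper]
  | cons a l ih =>
    by_cases h : a ≤ p
    · rw [show splitUpper p (a :: l) = [] :: splitUpper p l by simp [splitUpper, h]]
      simp [List.filter_cons, h, ih]
    · cases hsl : splitUpper p l with
      | nil => exact absurd hsl (splitUpper_ne_nil p l)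
      | cons s rest =>
        rw [show splitUpper p (a :: l) = ((a - p) :: s) :: rest by
          simp [splitUpper, h, hsl]]
        rw [hsl] at ih
        simp only [List.flatten_cons] at ih ⊢
        simp [List.filter_cons, h, ← ih]

lemma upperW_flatten (p : ℕ) (B : List (List ℕ)) :
    (upperW p B).flatten = (B.flatten.filter (fun a => !decide (a ≤ p))).map (· - p) := by
  induction B with
  | nil => rfl
  | cons b bs ih =>
    have : upperW p (b :: bs) = splitUpper p b ++ upperW p bs := by simp [upperW]
    rw [this]
    simp [List.filter_append, splitUpper_flatten, ih]

lemma splitUpper_length (p : ℕ) (b : List ℕ) :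
    (splitUpper p b).length = (b.filter (fun a => decide (a ≤ p))).length + 1 := by
  induction b with
  | nil => simp [splitUpper]
  | cons a l ih =>
    by_cases h : a ≤ p
    · rw [show splitUpper p (a :: l) = [] :: splitUpper p l by simp [splitUpper, h]]
      simp [List.filter_cons, h, ih]
    · cases hsl : splitUpper p l with
      | nil => exact absurd hsl (splitUpper_ne_nil p l)
      | cons s rest =>
        rw [show splitUpper p (a :: l) = ((a - p) :: s) :: rest by
          simp [splitUpper, h, hsl]]
        rw [hsl] at ih
        simp [List.filter_cons, h] at ih ⊢
        omega

lemma upperW_length (p : ℕ) (B : List (List ℕ)) :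
    (upperW p B).length = (B.flatten.filter (fun a => decide (a ≤ p))).length + B.length := by
  induction B with
  | nil => rfl
  | cons b bs ih =>
    have : upperW p (b :: bs) = splitUpper p b ++ upperW p bs := by simp [upperW]
    rw [this]
    simp only [List.length_append, splitUpper_length, ih, List.flatten_cons,
      List.filter_append, List.length_append, List.length_cons]
    omega

lemma lowerW_length (p : ℕ) (B : List (List ℕ)) : (lowerW p B).length = B.length := by
  simp [lowerW]

/-- count of letters `≤ p` in a permutation word of `{1,…,n}` is `p`, for `p ≤ n`. -/
lemma filter_length_of_perm {L : List ℕ} {n : ℕ} (hL : L.Perm (List.range' 1 n)) (p : ℕ)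
    (hp : p ≤ n) :
    (L.filter (fun a => decide (a ≤ p))).length = p := by
  have h1 : (L.filter (fun a => decide (a ≤ p))).length
      = ((List.range' 1 n).filter (fun a => decide (a ≤ p))).length := by
    rw [← List.countP_eq_length_filter, ← List.countP_eq_length_filter]
    exact hL.countP_eq _
  rw [h1]
  have h2 : List.range' 1 p ++ List.range' (1 + p) (n - p) = List.range' 1 n := by
    have h5 := @List.range'_append 1 p (n - p) 1
    rw [Nat.one_mul] at h5
    rw [h5]
    congr 1
    omega
  rw [← h2, List.filter_append]
  have h3 : (List.range' 1 p).filter (fun a => decide (a ≤ p)) = List.range' 1 p := by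
    apply List.filter_eq_self.mpr
    intro a ha
    rcases List.mem_range'_1.mp ha with ⟨h4, h5⟩
    simp; omega
  have h4 : (List.range' (1 + p) (n - p)).filter (fun a => decide (a ≤ p)) = [] := by
    apply List.filter_eq_nil_iff.mpr
    intro a ha
    rcases List.mem_range'_1.mp ha with ⟨h5, h6⟩
    simp; omega
  rw [h3, h4]
  simp

lemma mem_flatten_bounds {B : List (List ℕ)} {n : ℕ}
    (hperm : B.flatten.Perm (List.range' 1 n)) {a : ℕ} (ha : a ∈ B.flatten) :
    1 ≤ a ∧ a < 1 + n :=
  List.mem_range'_1.mp (hperm.mem_iff.mp ha)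


lemma filter_not_length_of_perm {L : List ℕ} {n : ℕ} (hL : L.Perm (List.range' 1 n)) (p : ℕ)
    (hp : p ≤ n) :
    (L.filter (fun a => !decide (a ≤ p))).length = n - p := by
  have h1 : (L.filter (fun a => !decide (a ≤ p))).length
      = ((List.range' 1 n).filter (fun a => !decide (a ≤ p))).length := by
    rw [← List.countP_eq_length_filter, ← List.countP_eq_length_filter]
    exact hL.countP_eq _
  rw [h1]
  have h2 : List.range' 1 p ++ List.range' (1 + p) (n - p) = List.range' 1 n := by
    have h5 := @List.range'_append 1 p (n - p) 1
    rw [Nat.one_mul] at h5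
    rw [h5]
    congr 1
    omega
  rw [← h2, List.filter_append]
  have h3 : (List.range' 1 p).filter (fun a => !decide (a ≤ p)) = [] := by
    apply List.filter_eq_nil_iff.mpr
    intro a ha
    rcases List.mem_range'_1.mp ha with ⟨h4, h5⟩
    simp; omega
  have h4 : (List.range' (1 + p) (n - p)).filter (fun a => !decide (a ≤ p))
      = List.range' (1 + p) (n - p) := by
    apply List.filter_eq_self.mpr
    intro a ha
    rcases List.mem_range'_1.mp ha with ⟨h5, h6⟩
    simp; omega
  rw [h3, h4]
  simp

def fappend (p n : ℕ) (a : Fin p → ℝ) (b : Fin (n - p) → ℝ) : Fin n → ℝ :=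
  fun i => if h : (i : ℕ) < p then a ⟨i, h⟩
    else b ⟨(i : ℕ) - p, by have := i.isLt; omega⟩

lemma continuous_finCons (n : ℕ) :
    Continuous fun q : ℝ × (Fin n → ℝ) => (Fin.cons q.1 q.2 : Fin (n + 1) → ℝ) := by
  apply continuous_pi
  intro i
  refine Fin.cases ?_ (fun j => ?_) i
  · simpa only [Fin.cons_zero] using (continuous_fst : Continuous fun q : ℝ × (Fin n → ℝ) => q.1)
  · simpa only [Fin.cons_succ, Function.comp_def] using (continuous_apply j).comp
      (continuous_snd : Continuous fun q : ℝ × (Fin n → ℝ) => q.2)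

lemma simplexIntegral_continuous {E : Type*} [NormedAddCommGroup E] [NormedSpace ℝ E]
    [CompleteSpace E] :
    ∀ (n : ℕ) {X : Type} [TopologicalSpace X] (g : X → (Fin n → ℝ) → E),
      (Continuous fun q : X × (Fin n → ℝ) => g q.1 q.2) →
      ∀ (a b : X → ℝ), Continuous a → Continuous b →
      Continuous fun x => simplexIntegral n (a x) (b x) (g x) := by
  intro n
  induction n with
  | zero =>
    intro X _ g hg a b _ _
    show Continuous fun x => g x Fin.elim0
    exact hg.comp (continuous_id.prodMk continuous_const)
  | succ n ih =>
    intro X _ g hg a b ha hb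
    show Continuous fun x =>
      ∫ r in a x..b x, simplexIntegral n (a x) r (fun ts => g x (Fin.cons r ts))
    have hcons : Continuous fun q : (X × ℝ) × (Fin n → ℝ) => g q.1.1 (Fin.cons q.1.2 q.2) := by
      have hc2 : Continuous fun q : (X × ℝ) × (Fin n → ℝ) =>
          (q.1.1, (Fin.cons q.1.2 q.2 : Fin (n + 1) → ℝ)) :=
        (continuous_fst.comp continuous_fst).prodMk ((continuous_finCons n).comp
          ((continuous_snd.comp continuous_fst).prodMk continuous_snd))
      exact hg.comp hc2
    have H : Continuous fun q : X × ℝ =>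
        simplexIntegral n (a q.1) q.2 (fun ts => g q.1 (Fin.cons q.2 ts)) :=
      ih (X := X × ℝ) (fun q ts => g q.1 (Fin.cons q.2 ts)) hcons (fun q => a q.1) (fun q => q.2)
        (ha.comp continuous_fst) continuous_snd
    have key : ∀ x, (∫ r in a x..b x, simplexIntegral n (a x) r (fun ts => g x (Fin.cons r ts)))
        = (∫ r in (0:ℝ)..b x, simplexIntegral n (a x) r fun ts => g x (Fin.cons r ts))
          - ∫ r in (0:ℝ)..a x, simplexIntegral n (a x) r fun ts => g x (Fin.cons r ts) := by
      intro x
      have hFx : Continuous fun r => simplexIntegral n (a x) r fun ts => g x (Fin.cons r ts) :=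
        H.comp (continuous_const.prodMk continuous_id)
      rw [← intervalIntegral.integral_add_adjacent_intervals
        (hFx.intervalIntegrable 0 (a x)) (hFx.intervalIntegrable (a x) (b x))]
      abel
    simp only [key]
    apply Continuous.sub
    · exact intervalIntegral.continuous_parametric_intervalIntegral_of_continuous
        (f := fun x r => simplexIntegral n (a x) r fun ts => g x (Fin.cons r ts)) H hb
    · exact intervalIntegral.continuous_parametric_intervalIntegral_of_continuous
        (f := fun x r => simplexIntegral n (a x) r fun ts => g x (Fin.cons r ts)) H ha

lemma continuous_fappend (p n : ℕ) :
    Continuous fun z : (Fin p → ℝ) × (Fin (n - p) → ℝ) => fappend p n z.1 z.2 := by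
  apply continuous_pi
  intro i
  by_cases h : (i : ℕ) < p
  · simp only [fappend, dif_pos h]
    exact (continuous_apply _).comp continuous_fst
  · simp only [fappend, dif_neg h]
    exact (continuous_apply _).comp continuous_snd

lemma fappend_lt {p n : ℕ} (a : Fin p → ℝ) (b : Fin (n - p) → ℝ) {i : ℕ} (h : i < n)
    (hip : i < p) : fappend p n a b ⟨i, h⟩ = a ⟨i, hip⟩ := by
  simp [fappend, hip]

lemma fappend_ge {p n : ℕ} (a : Fin p → ℝ) (b : Fin (n - p) → ℝ) {i : ℕ} (h : i < n)
    (hip : p ≤ i) (h2 : i - p < n - p) : fappend p n a b ⟨i, h⟩ = b ⟨i - p, h2⟩ := by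
  simp [fappend, Nat.not_lt.mpr hip]

lemma simplexIntegral_index_congr {E : Type*} [NormedAddCommGroup E] [NormedSpace ℝ E]
    {m m' : ℕ} (h : m = m') (s t : ℝ) (g : (Fin m → ℝ) → E) (g' : (Fin m' → ℝ) → E)
    (hg : ∀ x : Fin m' → ℝ, g (fun i => x (Fin.cast h i)) = g' x) :
    simplexIntegral m s t g = simplexIntegral m' s t g' := by
  subst h
  have : g = g' := by
    funext x
    have := hg x
    simpa using this
  rw [this]

lemma fappend_zero (n : ℕ) (a : Fin 0 → ℝ) (b : Fin (n - 0) → ℝ) : fappend 0 n a b = b := by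
  funext i
  simp [fappend]

lemma fappend_cons (n q : ℕ) (r : ℝ) (a : Fin q → ℝ) (x : Fin (n + 1 - (q + 1)) → ℝ) :
    fappend (q + 1) (n + 1) (Fin.cons r a) x
      = Fin.cons r (fappend q n a (fun i => x (Fin.cast (by omega) i))) := by
  funext j
  refine Fin.cases ?_ (fun j' => ?_) j
  · simp [fappend]
  · simp only [Fin.cons_succ, fappend, Fin.val_succ]
    by_cases h1 : (j' : ℕ) < q
    · rw [dif_pos (by omega : (j' : ℕ) + 1 < q + 1), dif_pos h1]
      exact @Fin.cons_succ _ (fun _ => ℝ) r a ⟨(j' : ℕ), h1⟩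
    · rw [dif_neg (by omega : ¬ (j' : ℕ) + 1 < q + 1), dif_neg h1]
      congr 1
      apply Fin.ext
      simp only [Fin.coe_cast]
      omega

theorem simplexIntegral_chen {E : Type*} [NormedAddCommGroup E] [NormedSpace ℝ E]
    [CompleteSpace E] :
    ∀ (n : ℕ) (g : (Fin n → ℝ) → E), Continuous g → ∀ (s u t : ℝ), s ≤ u → u ≤ t →
      simplexIntegral n s t g = ∑ p ∈ Finset.range (n + 1),
        simplexIntegral p u t
          (fun a => simplexIntegral (n - p) s u (fun b => g (fappend p n a b))) := by
  intro n
  induction n with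
  | zero =>
    intro g hg s u t hsu hut
    rw [Finset.sum_range_one]
    exact congrArg g (funext fun i => i.elim0)
  | succ n ih =>
    intro g hg s u t hsu hut
    have hconsr : ∀ r : ℝ, Continuous fun ts : Fin n → ℝ => g (Fin.cons r ts) := by
      intro r
      exact hg.comp ((continuous_finCons n).comp (continuous_const.prodMk continuous_id))
    have hKcont : Continuous fun r => simplexIntegral n s r fun ts => g (Fin.cons r ts) := by
      have := simplexIntegral_continuous n (X := ℝ) (fun r ts => g (Fin.cons r ts))
        (hg.comp (continuous_finCons n)) (fun _ => s) id continuous_const continuous_id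
      exact this
    have hsplit : simplexIntegral (n + 1) s t g
        = (∫ r in s..u, simplexIntegral n s r fun ts => g (Fin.cons r ts))
          + ∫ r in u..t, simplexIntegral n s r fun ts => g (Fin.cons r ts) := by
      show (∫ r in s..t, simplexIntegral n s r fun ts => g (Fin.cons r ts)) = _
      rw [intervalIntegral.integral_add_adjacent_intervals
        (hKcont.intervalIntegrable s u) (hKcont.intervalIntegrable u t)]
    -- continuity of the summand integrands
    have hterm : ∀ q : ℕ, Continuous fun r : ℝ => simplexIntegral q u r
        (fun a => simplexIntegral (n - q) s u
          (fun b => g (Fin.cons r (fappend q n a b)))) := by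
      intro q
      have hinner : Continuous fun z : (ℝ × (Fin q → ℝ)) × (Fin (n - q) → ℝ) =>
          g (Fin.cons z.1.1 (fappend q n z.1.2 z.2)) := by
        apply hg.comp
        exact (continuous_finCons n).comp
          ((continuous_fst.comp continuous_fst).prodMk ((continuous_fappend q n).comp
            ((continuous_snd.comp continuous_fst).prodMk continuous_snd)))
      have hG : Continuous fun z : ℝ × (Fin q → ℝ) =>
          simplexIntegral (n - q) s u (fun b => g (Fin.cons z.1 (fappend q n z.2 b))) :=
        simplexIntegral_continuous (n - q) (X := ℝ × (Fin q → ℝ))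
          (fun z b => g (Fin.cons z.1 (fappend q n z.2 b))) hinner
          (fun _ => s) (fun _ => u) continuous_const continuous_const
      exact simplexIntegral_continuous q (X := ℝ)
        (fun r a => simplexIntegral (n - q) s u (fun b => g (Fin.cons r (fappend q n a b))))
        hG (fun _ => u) id continuous_const continuous_id
    -- rewrite the second piece by the induction hypothesis
    have h2 : (∫ r in u..t, simplexIntegral n s r fun ts => g (Fin.cons r ts))
        = ∑ q ∈ Finset.range (n + 1), ∫ r in u..t,
            simplexIntegral q u r (fun a => simplexIntegral (n - q) s u
              (fun b => g (Fin.cons r (fappend q n a b)))) := by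
      rw [← intervalIntegral.integral_finset_sum]
      · apply intervalIntegral.integral_congr
        intro r hr
        rw [Set.uIcc_of_le hut] at hr
        exact ih (fun ts => g (Fin.cons r ts)) (hconsr r) s u r hsu hr.1
      · intro q _
        exact (hterm q).intervalIntegrable u t
    -- identify each summand with the shifted Chen term
    have h3 : ∀ q : ℕ, (∫ r in u..t, simplexIntegral q u r
          (fun a => simplexIntegral (n - q) s u
            (fun b => g (Fin.cons r (fappend q n a b)))))
        = simplexIntegral (q + 1) u t (fun a => simplexIntegral (n + 1 - (q + 1)) s u
            (fun b => g (fappend (q + 1) (n + 1) a b))) := by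
      intro q
      show _ = ∫ r in u..t, simplexIntegral q u r (fun a =>
        simplexIntegral (n + 1 - (q + 1)) s u
          (fun b => g (fappend (q + 1) (n + 1) (Fin.cons r a) b)))
      congr 1
      funext r
      congr 1
      funext a
      refine simplexIntegral_index_congr (by omega) s u _ _ ?_
      intro x
      rw [fappend_cons]
    -- the zeroth Chen term
    have h0 : simplexIntegral 0 u t (fun a : Fin 0 → ℝ =>
          simplexIntegral (n + 1 - 0) s u (fun b => g (fappend 0 (n + 1) a b)))
        = ∫ r in s..u, simplexIntegral n s r fun ts => g (Fin.cons r ts) := by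
      show simplexIntegral (n + 1) s u (fun b => g (fappend 0 (n + 1) Fin.elim0 b)) = _
      have : (fun b : Fin (n + 1 - 0) → ℝ => g (fappend 0 (n + 1) Fin.elim0 b)) = g := by
        funext b
        rw [fappend_zero]
      exact (congrArg (simplexIntegral (n + 1) s u) this).trans rfl
    rw [hsplit, h2, Finset.sum_range_succ' _ (n + 1), h0]
    rw [add_comm]
    congr 1
    apply Finset.sum_congr rfl
    intro q _
    exact h3 q

lemma sigApply_eq {A : Type*} [NormedRing A] [NormedAlgebra ℂ A] (X : ℝ → A)
    (C : List (List ℕ)) (s t : ℝ) {N : ℕ} (m : (Fin N → A) → A) (Ys : List A)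
    (q : ℕ) (hq : C.flatten.length = q) :
    sigApply X C s t m Ys = simplexIntegral q s t fun ts =>
      m fun i : Fin N =>
        (zList (fun ℓ => if h : ℓ - 1 < q then deriv X (ts ⟨ℓ - 1, h⟩) else 1) C Ys).getD
          (i : ℕ) 1 := by
  subst hq
  rfl

lemma cont_integrand {A : Type*} [NormedRing A] [NormedAlgebra ℂ A] (X : ℝ → A)
    (hX : ContDiff ℝ 1 X) (n : ℕ) (B : List (List ℕ)) (Ys : List A) {N : ℕ}
    (m : (Fin N → A) → A) (hm : Continuous m) :
    Continuous fun ts : Fin n → ℝ =>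
      m fun i : Fin N =>
        (zList (fun ℓ => if h : ℓ - 1 < n then deriv X (ts ⟨ℓ - 1, h⟩) else 1) B Ys).getD
          (i : ℕ) 1 := by
  apply hm.comp
  apply continuous_pi
  intro i
  have key : ∀ ts : Fin n → ℝ,
      zList (fun ℓ => if h : ℓ - 1 < n then deriv X (ts ⟨ℓ - 1, h⟩) else 1) B Ys
        = (zList (fun ℓ => (fun ts' : Fin n → ℝ =>
            if h : ℓ - 1 < n then deriv X (ts' ⟨ℓ - 1, h⟩) else 1)) B
              (Ys.map (fun y _ => y))).map (fun F => F ts) := by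
    intro ts
    have h1 := map_zList (A := (Fin n → ℝ) → A) (C := A) (fun F => F ts) rfl
      (fun ℓ => (fun ts' : Fin n → ℝ =>
        if h : ℓ - 1 < n then deriv X (ts' ⟨ℓ - 1, h⟩) else 1)) B
      (Ys.map (fun y _ => y))
    have h2 : (Ys.map (fun y (_ : Fin n → ℝ) => y)).map (fun F => F ts) = Ys := by
      rw [List.map_map]
      exact List.map_id Ys
    rw [h2] at h1
    exact h1.symm
  simp only [key]
  set L := zList (fun ℓ => (fun ts' : Fin n → ℝ =>
      if h : ℓ - 1 < n then deriv X (ts' ⟨ℓ - 1, h⟩) else 1)) B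
        (Ys.map (fun y (_ : Fin n → ℝ) => y)) with hL
  have hallc : ∀ F ∈ L, Continuous F := by
    intro F hF
    rcases zList_mem _ B _ F hF with ⟨c, _, rfl⟩ | hF | rfl
    · by_cases h : c - 1 < n
      · simp only [dif_pos h]
        exact (hX.continuous_deriv le_rfl).comp (continuous_apply _)
      · simp only [dif_neg h]
        exact continuous_const
    · rcases List.mem_map.mp hF with ⟨y, _, rfl⟩
      exact continuous_const
    · exact continuous_const
  by_cases hi : (i : ℕ) < L.length
  · have h1 : ∀ ts : Fin n → ℝ, (L.map (fun F => F ts)).getD (i : ℕ) 1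
        = L[(i : ℕ)] ts := by
      intro ts
      rw [List.getD_eq_getElem _ _ (by simpa using hi), List.getElem_map]
    simp only [h1]
    exact hallc _ (List.getElem_mem hi)
  · have h1 : ∀ ts : Fin n → ℝ, (L.map (fun F => F ts)).getD (i : ℕ) 1 = 1 := by
      intro ts
      apply List.getD_eq_default
      simpa using not_lt.mp hi
    simp only [h1]
    exact continuous_const

/-- Chen relation for the non-commutative signature operators: let `A` be
a complex unital Banach algebra and `X : ℝ → A` continuously differentiable.  For every
levelled forest `f` with `n = ‖f‖`, `k = nt(f)`, every continuous `(n+k−1)`-linear map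
`m : A^{n+k−1} → A`, and all reals `s ≤ u ≤ t`,
`𝒳_{s,t}(f)(m) = Σ_{p=0}^{n} 𝒳_{u,t}(f_-^p)(𝒳_{s,u}(f_+^p)(m))`
as (continuous `(k−1)`-linear) maps `A^{k−1} → A`. -/
theorem sigApply_chen {A : Type*} [NormedRing A] [NormedAlgebra ℂ A] [CompleteSpace A]
    (X : ℝ → A) (hX : ContDiff ℝ 1 X) (B : List (List ℕ)) (hB : IsLF B)
    (m : ContinuousMultilinearMap ℂ
      (fun _ : Fin (B.flatten.length + B.length - 1) => A) A)
    (s u t : ℝ) (hsu : s ≤ u) (hut : u ≤ t)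
    (Ys : List A) (hYs : Ys.length = B.length - 1) :
    sigApply X B s t ⇑m Ys =
      ∑ p ∈ Finset.range (B.flatten.length + 1),
        sigApply X (lowerW p B) u t
          (fun W : Fin (p + B.length - 1) → A =>
            sigApply X (upperW p B) s u ⇑m (List.ofFn W)) Ys := by
  obtain ⟨hBne, hperm⟩ := hB
  have hk : 1 ≤ B.length := List.length_pos_iff.mpr hBne
  rw [sigApply_eq X B s t ⇑m Ys B.flatten.length rfl]
  rw [simplexIntegral_chen B.flatten.length _
    (cont_integrand X hX B.flatten.length B Ys ⇑m m.cont) s u t hsu hut]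
  refine Finset.sum_congr rfl ?_
  intro p hp
  have hpn : p ≤ B.flatten.length := Nat.lt_succ_iff.mp (Finset.mem_range.mp hp)
  have hlow : (lowerW p B).flatten.length = p := by
    rw [lowerW_flatten]
    exact filter_length_of_perm hperm p hpn
  have hup : (upperW p B).flatten.length = B.flatten.length - p := by
    rw [upperW_flatten, List.length_map]
    exact filter_not_length_of_perm hperm p hpn
  rw [sigApply_eq X (lowerW p B) u t _ Ys p hlow]
  refine congrArg (simplexIntegral p u t) (funext fun a => ?_)
  have hLLlen : (zList (fun ℓ => if h : ℓ - 1 < p then deriv X (a ⟨ℓ - 1, h⟩) else 1)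
      (lowerW p B) Ys).length = p + B.length - 1 := by
    have h1 := zList_length (fun ℓ => if h : ℓ - 1 < p then deriv X (a ⟨ℓ - 1, h⟩) else 1)
      (lowerW p B) Ys (by simpa [lowerW] using hBne)
    rw [hlow, lowerW_length] at h1
    omega
  show simplexIntegral (B.flatten.length - p) s u _
      = sigApply X (upperW p B) s u ⇑m (List.ofFn fun i : Fin (p + B.length - 1) =>
          (zList (fun ℓ => if h : ℓ - 1 < p then deriv X (a ⟨ℓ - 1, h⟩) else 1)
            (lowerW p B) Ys).getD (i : ℕ) 1)
  rw [ofFn_getD _ (p + B.length - 1) hLLlen]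
  rw [sigApply_eq X (upperW p B) s u ⇑m _ (B.flatten.length - p) hup]
  refine congrArg (simplexIntegral (B.flatten.length - p) s u) (funext fun b => ?_)
  show (⇑m) (fun i : Fin (B.flatten.length + B.length - 1) =>
      (zList (fun ℓ => if h : ℓ - 1 < B.flatten.length
        then deriv X (fappend p B.flatten.length a b ⟨ℓ - 1, h⟩) else 1) B Ys).getD (i : ℕ) 1)
    = _
  refine congrArg _ (funext fun i => ?_)
  have hyp1 : ∀ c ∈ B.flatten, p < c →
      (if h : c - p - 1 < B.flatten.length - p then deriv X (b ⟨c - p - 1, h⟩) else 1)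
        = (if h : c - 1 < B.flatten.length
            then deriv X (fappend p B.flatten.length a b ⟨c - 1, h⟩) else 1) := by
    intro c hc hpc
    have hbd := mem_flatten_bounds hperm hc
    have e1 : c - p - 1 = c - 1 - p := by omega
    rw [dif_pos (show c - p - 1 < B.flatten.length - p by omega),
      dif_pos (show c - 1 < B.flatten.length by omega),
      fappend_ge a b _ (by omega) (by omega)]
    simp only [e1]
  have hyp2 : ∀ c ∈ (lowerW p B).flatten,
      (if h : c - 1 < B.flatten.length
          then deriv X (fappend p B.flatten.length a b ⟨c - 1, h⟩) else 1)
        = (if h : c - 1 < p then deriv X (a ⟨c - 1, h⟩) else 1) := by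
    intro c hc
    rw [lowerW_flatten] at hc
    rcases List.mem_filter.mp hc with ⟨hcB, hcp⟩
    have hcp' : c ≤ p := by simpa using hcp
    have hbd := mem_flatten_bounds hperm hcB
    rw [dif_pos (show c - 1 < B.flatten.length by omega),
      dif_pos (show c - 1 < p by omega),
      fappend_lt a b _ (show c - 1 < p by omega)]
  have hlist := zList_split p
    (fun ℓ => if h : ℓ - 1 < B.flatten.length - p then deriv X (b ⟨ℓ - 1, h⟩) else 1)
    (fun ℓ => if h : ℓ - 1 < B.flatten.length
      then deriv X (fappend p B.flatten.length a b ⟨ℓ - 1, h⟩) else 1)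
    B Ys hyp1
  have hcongr := zList_congr
    (fun ℓ => if h : ℓ - 1 < B.flatten.length
      then deriv X (fappend p B.flatten.length a b ⟨ℓ - 1, h⟩) else 1)
    (fun ℓ => if h : ℓ - 1 < p then deriv X (a ⟨ℓ - 1, h⟩) else 1)
    (lowerW p B) Ys hyp2
  rw [hlist, hcongr]
end
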